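/- For any n ≥ 6 and r ≥ 0, HS_k(I(CH_{n,r}^c)) ≠ 0 if and only if k ≤ r + n - 4, and likewise HS_k(I(ACH_{n,r}^c)) ≠ 0 if and only if k ≤ r + n - 4. -/

import Mathlib

open Finset

/-- Edge relation of the graph `Hₙ` (one orientation). -/
def HE (n a b : ℕ) : Prop :=
  (1 ≤ a ∧ a ≤ n - 5 ∧ b = a + 1) ∨
  (a = n - 4 ∧ b = n - 2) ∨ (a = n - 2 ∧ b = n - 3) ∨
  (a = n - 1 ∧ 2 ≤ b ∧ b ≤ n ∧ b ≠ n - 1) ∨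
  (a = n ∧ 1 ≤ b ∧ b ≤ n ∧ b ≠ n - 3 ∧ b ≠ n)

/-- Edge relation of the graph `Hₙ` (symmetrized). -/
def Hedge (n a b : ℕ) : Prop := HE n a b ∨ HE n b a

def LHE (n r a b : ℕ) : Prop :=
  (n + 1 ≤ a ∧ a ≤ n + r ∧ 1 ≤ b ∧ b ≤ n ∧ b ≠ n - 3) ∨
  (n + 1 ≤ a ∧ a ≤ n + r ∧ n + 1 ≤ b ∧ b ≤ n + r ∧ a ≠ b)

/-- Edge relation of `LH_{n,r}`. -/
def LHedge (n r a b : ℕ) : Prop := Hedge n a b ∨ LHE n r a b ∨ LHE n r b a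

/-- Edge relation of `CH_{n,r}`: a shifted copy of `Hₙ` on `{r+1,…,r+n}`,
a clique on `{1,…,r}`, each clique vertex joined to `x_{r+n-1}` and `x_{r+n}`. -/
def CHedge (n r a b : ℕ) : Prop :=
  (r < a ∧ r < b ∧ Hedge n (a - r) (b - r)) ∨
  (1 ≤ a ∧ a ≤ r ∧ 1 ≤ b ∧ b ≤ r ∧ a ≠ b) ∨
  (1 ≤ a ∧ a ≤ r ∧ (b = r + n - 1 ∨ b = r + n)) ∨
  (1 ≤ b ∧ b ≤ r ∧ (a = r + n - 1 ∨ a = r + n))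

/-- Edge relation of `ACH_{n,r}`: `CH_{n,r}` plus edges from `{1,…,r}` to `x_{r+n-2}`. -/
def ACHedge (n r a b : ℕ) : Prop :=
  CHedge n r a b ∨ (1 ≤ a ∧ a ≤ r ∧ b = r + n - 2) ∨ (1 ≤ b ∧ b ≤ r ∧ a = r + n - 2)

/-- Minimal generators (as squarefree supports) of the `k`-th homological shift ideal
`HS_k(I(G^c))` of the edge ideal of the complement of a graph `G` with edge relation `E`
on vertex set `V`, whose natural order is a perfect elimination ordering
(Herzog–Moradi–Rahimbeigi–Zhu description). -/
def hsGens (E : ℕ → ℕ → Prop) (V : Finset ℕ) (k : ℕ) : Set (Finset ℕ) :=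
  {h | h ⊆ V ∧ h.card = k + 2 ∧
    ∃ t ∈ h, (∃ l ∈ h, t < l) ∧ ∀ l ∈ h, t < l → ¬ E t l}

/-- The successive-colon (linear quotients) condition for a given ordering of the
minimal generators of a squarefree monomial ideal generated in one degree. -/
def LQList (L : List (Finset ℕ)) : Prop :=
  ∀ i j : Fin L.length, i < j →
    ∃ p : Fin L.length, p < j ∧ ∃ v : ℕ,
      L.get p \ L.get j = {v} ∧ v ∈ L.get i \ L.get j

/-- A finite set of squarefree monomials (generators of an equigenerated monomial ideal)
has linear quotients: some linear order of the generators works. -/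
def HasLQ (S : Set (Finset ℕ)) : Prop :=
  ∃ L : List (Finset ℕ), L.Nodup ∧ (∀ h, h ∈ L ↔ h ∈ S) ∧ LQList L

/-- `g >_lex f` for squarefree monomials with variable order `x₁ > x₂ > ⋯`. -/
def lexGt (g f : Finset ℕ) : Prop :=
  List.Lex (· < ·) (g.sort (· ≤ ·)) (f.sort (· ≤ ·))

def fmax (h : Finset ℕ) : ℕ := h.sup id
noncomputable def fmin (h : Finset ℕ) : ℕ := sInf (↑h : Set ℕ)
def smax (h : Finset ℕ) : ℕ := (h.erase (fmax h)).sup id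

/-- The natural order on vertices is a perfect elimination ordering. -/
def IsPEO (E : ℕ → ℕ → Prop) (V : Finset ℕ) : Prop :=
  ∀ i ∈ V, ∀ j ∈ V, ∀ l ∈ V, i < j → i < l → j ≠ l → E i j → E i l → E j l

/-- A graph on `V` is chordal iff some relabeling of the vertices is a perfect
elimination ordering. -/
def ChordalOn (E : ℕ → ℕ → Prop) (V : Finset ℕ) : Prop :=
  ∃ π : ℕ → ℕ, Set.BijOn π ↑V ↑V ∧ IsPEO (fun a b => E (π a) (π b)) V

lemma not_CH (n r l : ℕ) (hn : 6 ≤ n) (h1 : r + 3 ≤ l) (h2 : l ≤ r + n - 1) :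
    ¬ CHedge n r (r + 1) l := by
  rintro (⟨-, -, hH⟩ | ⟨-, h, -, -, -⟩ | ⟨-, h, -⟩ | ⟨-, h, -⟩)
  · revert hH; unfold Hedge HE; omega
  · omega
  · omega
  · omega

lemma not_ACH (n r l : ℕ) (hn : 6 ≤ n) (h1 : r + 3 ≤ l) (h2 : l ≤ r + n - 1) :
    ¬ ACHedge n r (r + 1) l := by
  rintro (hC | ⟨-, h, -⟩ | ⟨-, h, -⟩)
  · exact not_CH n r l hn h1 h2 hC
  · omega
  · omega

lemma hedge_gen (m j : ℕ) (h2 : 2 ≤ j) (hj : j ≤ m + 4) : Hedge (m + 6) j (m + 5) :=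
  Or.inr (Or.inr (Or.inr (Or.inr (Or.inl ⟨by omega, h2, by omega, by omega⟩))))

lemma hedge_top (m j : ℕ) (h1 : 1 ≤ j) (hj : j ≤ m + 5) (hne : j ≠ m + 3) :
    Hedge (m + 6) j (m + 6) :=
  Or.inr (Or.inr (Or.inr (Or.inr (Or.inr ⟨rfl, h1, by omega, by omega, by omega⟩))))

lemma hedge_chain (m j : ℕ) (h1 : 1 ≤ j) (hj : j ≤ m + 1) : Hedge (m + 6) j (j + 1) :=
  Or.inl (Or.inl ⟨h1, by omega, rfl⟩)

lemma hedge_a (m : ℕ) : Hedge (m + 6) (m + 3) (m + 4) :=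
  Or.inr (Or.inr (Or.inr (Or.inl ⟨by omega, by omega⟩)))

lemma two_nbrs (n r t : ℕ) (hn : 6 ≤ n) (ht1 : 1 ≤ t) (ht : t < r + n)
    (hne : t ≠ r + n - 1) :
    ∃ u v, t < u ∧ t < v ∧ u ≠ v ∧ u ≤ r + n ∧ v ≤ r + n ∧
      CHedge n r t u ∧ CHedge n r t v := by
  obtain ⟨m, rfl⟩ : ∃ m, n = m + 6 := ⟨n - 6, by omega⟩
  rcases le_or_gt t r with h1 | h1
  · exact ⟨r + m + 5, r + m + 6, by omega, by omega, by omega, by omega, by omega,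
      Or.inr (Or.inr (Or.inl ⟨ht1, h1, Or.inl (by omega)⟩)),
      Or.inr (Or.inr (Or.inl ⟨ht1, h1, Or.inr (by omega)⟩))⟩
  · rcases eq_or_ne t (r + 1) with h2 | h2
    · refine ⟨t + 1, r + m + 6, by omega, by omega, by omega, by omega, by omega,
        Or.inl ⟨h1, by omega, ?_⟩, Or.inl ⟨h1, by omega, ?_⟩⟩
      · rw [show t + 1 - r = (t - r) + 1 from by omega]
        exact hedge_chain m (t - r) (by omega) (by omega)
      · rw [show t - r = 1 from by omega, show r + m + 6 - r = m + 6 from by omega]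
        exact hedge_top m 1 (by omega) (by omega) (by omega)
    rcases eq_or_ne t (r + m + 3) with h3 | h3
    · refine ⟨r + m + 4, r + m + 5, by omega, by omega, by omega, by omega, by omega,
        Or.inl ⟨h1, by omega, ?_⟩, Or.inl ⟨h1, by omega, ?_⟩⟩
      · rw [show t - r = m + 3 from by omega, show r + m + 4 - r = m + 4 from by omega]
        exact hedge_a m
      · rw [show t - r = m + 3 from by omega, show r + m + 5 - r = m + 5 from by omega]
        exact hedge_gen m (m + 3) (by omega) (by omega)
    · refine ⟨r + m + 5, r + m + 6, by omega, by omega, by omega, by omega, by omega,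
        Or.inl ⟨h1, by omega, ?_⟩, Or.inl ⟨h1, by omega, ?_⟩⟩
      · rw [show r + m + 5 - r = m + 5 from by omega]
        exact hedge_gen m (t - r) (by omega) (by omega)
      · rw [show r + m + 6 - r = m + 6 from by omega]
        exact hedge_top m (t - r) (by omega) (by omega) (by omega)

lemma hs_bound (n r : ℕ) (hn : 6 ≤ n) (E : ℕ → ℕ → Prop)
    (hE : ∀ a b, CHedge n r a b → E a b) (k : ℕ)
    (hne : (hsGens E (Finset.Icc 1 (r + n)) k).Nonempty) : k ≤ r + n - 4 := by
  obtain ⟨h, hsub, hcard, t, hth, ⟨l0, hl0, htl0⟩, hmax⟩ := hne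
  by_contra hk
  push_neg at hk
  have hIcc : (Finset.Icc 1 (r + n)).card = r + n := by
    rw [Nat.card_Icc]; omega
  have hl0m := Finset.mem_Icc.mp (hsub hl0)
  have htm := Finset.mem_Icc.mp (hsub hth)
  rcases eq_or_ne t (r + n - 1) with h1 | h1
  · have hl0e : l0 = r + n := by omega
    refine hmax l0 hl0 htl0 (hE _ _ (Or.inl ⟨by omega, by omega, ?_⟩))
    obtain ⟨m, rfl⟩ : ∃ m, n = m + 6 := ⟨n - 6, by omega⟩
    rw [show t - r = m + 5 from by omega, show l0 - r = m + 6 from by omega]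
    exact hedge_top m (m + 5) (by omega) (by omega) (by omega)
  · obtain ⟨u, v, htu, htv, huv, hu, hv, heu, hev⟩ :=
      two_nbrs n r t hn htm.1 (by omega) h1
    have key : u ∈ h ∨ v ∈ h := by
      by_contra hc
      push_neg at hc
      have hsub2 : h ⊆ ((Finset.Icc 1 (r + n)).erase u).erase v := by
        intro x hx
        rw [Finset.mem_erase, Finset.mem_erase]
        exact ⟨fun hxv => hc.2 (hxv ▸ hx), fun hxu => hc.1 (hxu ▸ hx), hsub hx⟩
      have hle := Finset.card_le_card hsub2
      have h1e : ((Finset.Icc 1 (r + n)).erase u).card = r + n - 1 := by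
        rw [Finset.card_erase_of_mem (Finset.mem_Icc.mpr ⟨by omega, hu⟩)]; omega
      have h2e : (((Finset.Icc 1 (r + n)).erase u).erase v).card = r + n - 2 := by
        rw [Finset.card_erase_of_mem
          (Finset.mem_erase.mpr ⟨huv.symm, Finset.mem_Icc.mpr ⟨by omega, hv⟩⟩)]
        omega
      omega
    rcases key with hk' | hk'
    · exact hmax u hk' htu (hE _ _ heu)
    · exact hmax v hk' htv (hE _ _ hev)

lemma hs_construct (n r k : ℕ) (hn : 6 ≤ n) (hk : k ≤ r + n - 4)
    (E : ℕ → ℕ → Prop) (hE : ∀ l, r + 3 ≤ l → l ≤ r + n - 1 → ¬ E (r + 1) l) :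
    (hsGens E (Finset.Icc 1 (r + n)) k).Nonempty := by
  have hdisj : Disjoint (Finset.Icc (r + 4) (r + n - 1)) (Finset.Icc 1 r) := by
    rw [Finset.disjoint_left]
    intro a ha hb
    rw [Finset.mem_Icc] at ha hb
    omega
  have hcard : k ≤ (Finset.Icc (r + 4) (r + n - 1) ∪ Finset.Icc 1 r).card := by
    rw [Finset.card_union_of_disjoint hdisj, Nat.card_Icc, Nat.card_Icc]
    omega
  obtain ⟨s, hs, hscard⟩ := Finset.exists_subset_card_eq hcard
  have hmem : ∀ x ∈ s, (r + 4 ≤ x ∧ x ≤ r + n - 1) ∨ (1 ≤ x ∧ x ≤ r) := by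
    intro x hx
    have := hs hx
    rw [Finset.mem_union, Finset.mem_Icc, Finset.mem_Icc] at this
    tauto
  have h3s : r + 3 ∉ s := fun hx => by have := hmem _ hx; omega
  have h1s : r + 1 ∉ insert (r + 3) s := by
    rw [Finset.mem_insert]
    rintro (h | h)
    · omega
    · have := hmem _ h; omega
  refine ⟨insert (r + 1) (insert (r + 3) s), ?_, ?_, r + 1, Finset.mem_insert_self _ _,
    ⟨r + 3, Finset.mem_insert_of_mem (Finset.mem_insert_self _ _), by omega⟩, ?_⟩
  · intro x hx
    rw [Finset.mem_insert, Finset.mem_insert] at hx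
    rw [Finset.mem_Icc]
    rcases hx with h | h | h
    · omega
    · omega
    · have := hmem _ h; omega
  · rw [Finset.card_insert_of_notMem h1s, Finset.card_insert_of_notMem h3s, hscard]
  · intro l hl hlt
    rw [Finset.mem_insert, Finset.mem_insert] at hl
    rcases hl with h | h | h
    · omega
    · exact h ▸ hE _ (by omega) (by omega)
    · have := hmem _ h
      exact hE _ (by omega) (by omega)

/-- For `n ≥ 6`, `r ≥ 0`: `HS_k(I(CH_{n,r}ᶜ)) ≠ 0` iff `k ≤ r+n-4`,
and likewise `HS_k(I(ACH_{n,r}ᶜ)) ≠ 0` iff `k ≤ r+n-4`. -/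
theorem hs_nonzero_CH_ACH (n r : ℕ) (hn : 6 ≤ n) :
    (∀ k, (hsGens (CHedge n r) (Finset.Icc 1 (r + n)) k).Nonempty ↔ k ≤ r + n - 4) ∧
    (∀ k, (hsGens (ACHedge n r) (Finset.Icc 1 (r + n)) k).Nonempty ↔ k ≤ r + n - 4) := by
  constructor
  · intro k
    constructor
    · exact hs_bound n r hn _ (fun _ _ h => h) k
    · intro hk
      exact hs_construct n r k hn hk _ (fun l h1 h2 => not_CH n r l hn h1 h2)
  · intro k
    constructor
    · exact hs_bound n r hn _ (fun _ _ h => Or.inl h) k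
    · intro hk
      exact hs_construct n r k hn hk _ (fun l h1 h2 => not_ACH n r l hn h1 h2)
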